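/- Let u be an automorphism of order 3 of the quaternion group Q_8, and let G = Q_8 ⋊ ⟨u⟩. Then for any two elements x, y ∈ G of order 3 there exists an automorphism φ of G with φ(x) = y. (In the paper's words: G has only one automorphism class of 3-elements.) -/

import Mathlib

open QuaternionGroup Subgroup

private abbrev Q : Type := QuaternionGroup 2

namespace Q8aux

/-- Candidate endomorphism of `Q₈` sending `a 1 ↦ s` and `xa 0 ↦ t`. -/
def U (s t : Q) : Q → Q
  | .a i => s ^ i.val
  | .xa i => t * s ^ i.val

lemma a_eq_pow : ∀ i : ZMod (2*2), (a i : Q) = (a 1) ^ i.val := by decide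

lemma xa_eq : ∀ i : ZMod (2*2), (xa i : Q) = xa 0 * a i := by decide

lemma hom_eq_U (u : Q →* Q) : ∀ x : Q, u x = U (u (a 1)) (u (xa 0)) x := by
  intro x
  cases x with
  | a i =>
    have h : u (a i) = u (a 1) ^ i.val := by rw [a_eq_pow i, map_pow]
    exact h
  | xa i =>
    have h : u (xa i) = u (xa 0) * u (a 1) ^ i.val := by
      rw [xa_eq i, map_mul, a_eq_pow i, map_pow]
    exact h

lemma key : ∀ s t : Q, (∀ x y, U s t (x*y) = U s t x * U s t y) →
    (∀ x, U s t (U s t (U s t x)) = x) →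
    ∃ t' : Q, (∀ x y, U (a 3) t' (x*y) = U (a 3) t' x * U (a 3) t' y) ∧
      (∀ x, U (a 3) t' (U (a 3) t' x) = x) ∧
      (∀ x, U (a 3) t' (U s t x) = U s t (U s t (U (a 3) t' x))) := by decide

lemma exists_f (u : MulAut Q) (hu3 : u ^ 3 = 1) :
    ∃ f : MulAut Q, f * u = u⁻¹ * f := by
  have hU : ∀ x : Q, u x = U (u (a 1)) (u (xa 0)) x := hom_eq_U u.toMonoidHom
  have hmul : ∀ x y : Q, U (u (a 1)) (u (xa 0)) (x*y)
      = U (u (a 1)) (u (xa 0)) x * U (u (a 1)) (u (xa 0)) y := by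
    intro x y
    simp only [← hU, map_mul]
  have hcube : ∀ x : Q, U (u (a 1)) (u (xa 0)) (U (u (a 1)) (u (xa 0))
      (U (u (a 1)) (u (xa 0)) x)) = x := by
    intro x
    simp only [← hU]
    have h3 : (u ^ 3) x = x := by rw [hu3]; rfl
    simpa [pow_succ, MulAut.mul_apply] using h3
  obtain ⟨t', h1, h2, h3⟩ := key _ _ hmul hcube
  refine ⟨⟨⟨U (a 3) t', U (a 3) t', h2, h2⟩, h1⟩, ?_⟩
  have huinv : u⁻¹ = u * u := by
    have h33 : (u * u) * u = 1 := by
      have hp : u ^ 3 = (u * u) * u := by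
        rw [pow_succ, pow_succ, pow_one]
      rw [← hp, hu3]
    exact (eq_inv_of_mul_eq_one_left h33).symm
  apply MulEquiv.ext
  intro x
  rw [huinv]
  have h9 := h3 x
  simp only [← hU] at h9
  simpa [MulAut.mul_apply] using h9

/-- Any two order-3 elements of a group of order 24 are conjugate up to inverse. -/
lemma conj_or_conj_inv {G : Type*} [Group G] [Finite G] (hG : Nat.card G = 24)
    (x y : G) (hx : orderOf x = 3) (hy : orderOf y = 3) :
    (∃ g : G, g * x * g⁻¹ = y) ∨ (∃ g : G, g * x * g⁻¹ = y⁻¹) := by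
  haveI : Fact (Nat.Prime 3) := ⟨by norm_num⟩
  have hx3 : Nat.card (zpowers x) = 3 := by rw [Nat.card_zpowers, hx]
  have hy3 : Nat.card (zpowers y) = 3 := by rw [Nat.card_zpowers, hy]
  obtain ⟨Sx, hSx⟩ := (IsPGroup.of_card (p := 3) (n := 1)
    (by rw [hx3, pow_one])).exists_le_sylow
  obtain ⟨Sy, hSy⟩ := (IsPGroup.of_card (p := 3) (n := 1)
    (by rw [hy3, pow_one])).exists_le_sylow
  have hcard : ∀ (S : Sylow 3 G) (z : G), orderOf z = 3 → zpowers z ≤ ↑S →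
      (zpowers z : Subgroup G) = ↑S := by
    intro S z hz hle
    apply Subgroup.eq_of_le_of_card_ge hle
    obtain ⟨n, hn⟩ := (IsPGroup.iff_card (p := 3)).mp S.2
    have hdvd : Nat.card ↥(S : Subgroup G) ∣ 24 := hG ▸ Subgroup.card_subgroup_dvd_card _
    rw [hn] at hdvd ⊢
    rw [Nat.card_zpowers, hz]
    have hn1 : n ≤ 1 := by
      by_contra hcon
      have h9 : (9 : ℕ) ∣ 3 ^ n := by
        have : (3:ℕ) ^ 2 ∣ 3 ^ n := pow_dvd_pow 3 (by omega)
        simpa using this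
      have : (9 : ℕ) ∣ 24 := h9.trans hdvd
      norm_num at this
    calc (3:ℕ) ^ n ≤ 3 ^ 1 := Nat.pow_le_pow_right (by norm_num) hn1
      _ = 3 := by norm_num
  have ex := hcard Sx x hx hSx
  have ey := hcard Sy y hy hSy
  obtain ⟨g, hg⟩ := MulAction.exists_smul_eq G Sx Sy
  have hzmem : g * x * g⁻¹ ∈ (Sy : Subgroup G) := by
    rw [← hg, Sylow.coe_subgroup_smul]
    have hx' : x ∈ (Sx : Subgroup G) := hSx (mem_zpowers x)
    have hmem := Subgroup.smul_mem_pointwise_smul x (MulAut.conj g) (↑Sx) hx'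
    simpa [MulAut.smul_def] using hmem
  rw [← ey] at hzmem
  obtain ⟨k, hk⟩ := Subgroup.mem_zpowers_iff.mp hzmem
  have hoz : orderOf (g * x * g⁻¹) = 3 := by
    rw [← hx]
    have hsc : SemiconjBy g x (g * x * g⁻¹) := by
      unfold SemiconjBy; group
    exact (hsc.orderOf_eq g).symm
  have hk3 : y ^ (k % 3) = g * x * g⁻¹ := by
    have hzm := zpow_mod_orderOf y k
    rw [hy] at hzm
    norm_num at hzm
    rw [hzm, hk]
  have hy1 : y * y * y = 1 := by
    have := pow_orderOf_eq_one y
    rw [hy, pow_succ, pow_succ, pow_one] at this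
    exact this
  have hcases : k % 3 = 0 ∨ k % 3 = 1 ∨ k % 3 = 2 := by omega
  rcases hcases with h | h | h
  · rw [h] at hk3
    simp only [zpow_zero] at hk3
    rw [← hk3] at hoz
    simp at hoz
  · left
    refine ⟨g, ?_⟩
    rw [h] at hk3
    simpa using hk3.symm
  · right
    refine ⟨g, ?_⟩
    rw [h] at hk3
    have h2 : y ^ (2:ℤ) = y⁻¹ := by
      have : y * y = y⁻¹ := eq_inv_of_mul_eq_one_left (by rw [mul_assoc] at hy1 ⊢; exact hy1)
      rw [← this]
      rw [show (2:ℤ) = (2:ℕ) by norm_num, zpow_natCast, pow_succ, pow_one]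
    rw [h2] at hk3
    exact hk3.symm

end Q8aux

open Q8aux SemidirectProduct

/-- For an automorphism `u` of order 3 of `Q₈` and `G = Q₈ ⋊ ⟨u⟩`,
any two elements of `G` of order `3` are related by an automorphism of `G`. -/
theorem q8_semidirect_one_aut_class_of_order_three
    (u : MulAut (QuaternionGroup 2)) (hu : orderOf u = 3)
    (x y : SemidirectProduct (QuaternionGroup 2)
      ↥(Subgroup.zpowers u) ((Subgroup.zpowers u).subtype))
    (hx : orderOf x = 3) (hy : orderOf y = 3) :
    ∃ φ : MulAut (SemidirectProduct (QuaternionGroup 2)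
      ↥(Subgroup.zpowers u) ((Subgroup.zpowers u).subtype)), φ x = y := by
  -- finiteness
  have hufin : IsOfFinOrder u := orderOf_pos_iff.mp (by rw [hu]; norm_num)
  haveI : Finite ↥(zpowers u) := hufin.finite_zpowers.to_subtype
  let e : (Q ⋊[(zpowers u).subtype] ↥(zpowers u)) ≃ Q × ↥(zpowers u) :=
    { toFun := fun g => (g.left, g.right)
      invFun := fun p => ⟨p.1, p.2⟩
      left_inv := fun ⟨l, r⟩ => rfl
      right_inv := fun _ => rfl }
  haveI : Finite (Q ⋊[(zpowers u).subtype] ↥(zpowers u)) := Finite.of_equiv _ e.symm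
  have cardG : Nat.card (Q ⋊[(zpowers u).subtype] ↥(zpowers u)) = 24 := by
    rw [Nat.card_congr e, Nat.card_prod, Nat.card_zpowers, hu,
      Nat.card_eq_fintype_card (α := Q), QuaternionGroup.card]
  -- the distinguished order-3 element
  set c : Q ⋊[(zpowers u).subtype] ↥(zpowers u) := inr ⟨u, mem_zpowers u⟩ with hcdef
  have hc : orderOf c = 3 := by
    rw [hcdef, orderOf_injective inr inr_injective, Subgroup.orderOf_mk, hu]
  -- the outer automorphism Φ with Φ c = c⁻¹
  have hu3 : u ^ 3 = 1 := by rw [← hu]; exact pow_orderOf_eq_one u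
  obtain ⟨f, hf⟩ := exists_f u hu3
  have hfr : ∀ (r : ↥(zpowers u)) (p : Q),
      f ((r : MulAut Q) p) = ((r : MulAut Q))⁻¹ (f p) := by
    intro r p
    obtain ⟨m, hm⟩ := Subgroup.mem_zpowers_iff.mp r.2
    have hconj : f * u * f⁻¹ = u⁻¹ := by
      rw [hf, mul_assoc, mul_inv_cancel, mul_one]
    have hm' : f * u ^ m * f⁻¹ = (u ^ m)⁻¹ := by
      have := map_zpow (MulAut.conj f) u m
      simp only [MulAut.conj_apply] at this
      rw [this, hconj, inv_zpow]
    have hm'' : f * u ^ m = (u ^ m)⁻¹ * f := by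
      rw [← hm']; group
    have := congrArg (fun (w : MulAut Q) => w p) hm''
    simp only [MulAut.mul_apply] at this
    rw [← hm]
    exact this
  let Φ : MulAut (Q ⋊[(zpowers u).subtype] ↥(zpowers u)) :=
    { toFun := fun g => ⟨f g.left, g.right⁻¹⟩
      invFun := fun g => ⟨f.symm g.left, g.right⁻¹⟩
      left_inv := by rintro ⟨l, r⟩; simp
      right_inv := by rintro ⟨l, r⟩; simp
      map_mul' := by
        rintro ⟨l₁, r₁⟩ ⟨l₂, r₂⟩
        apply SemidirectProduct.ext
        · show f (l₁ * ((zpowers u).subtype r₁) l₂)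
            = f l₁ * ((zpowers u).subtype r₁⁻¹) (f l₂)
          rw [map_mul]
          congr 1
          exact hfr r₁ l₂
        · show (r₁ * r₂)⁻¹ = r₁⁻¹ * r₂⁻¹
          exact (open scoped IsMulCommutative in mul_inv r₁ r₂) }
  have hΦc : Φ c = c⁻¹ := by
    show (⟨f 1, (⟨u, mem_zpowers u⟩ : ↥(zpowers u))⁻¹⟩ :
      Q ⋊[(zpowers u).subtype] ↥(zpowers u)) = c⁻¹
    rw [hcdef, ← map_inv inr]
    apply SemidirectProduct.ext
    · simp
    · simp
  -- every order-3 element admits an automorphism inverting it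
  have key2 : ∀ z : Q ⋊[(zpowers u).subtype] ↥(zpowers u), orderOf z = 3 →
      ∃ ψ : MulAut (Q ⋊[(zpowers u).subtype] ↥(zpowers u)), ψ z = z⁻¹ := by
    intro z hz
    rcases conj_or_conj_inv cardG c z hc hz with ⟨h, hh⟩ | ⟨h, hh⟩
    · refine ⟨MulAut.conj h * Φ * (MulAut.conj h)⁻¹, ?_⟩
      have hcz : (MulAut.conj h)⁻¹ z = c := by
        rw [MulAut.inv_def]
        refine (MulEquiv.symm_apply_eq _).mpr ?_
        rw [MulAut.conj_apply]
        exact hh.symm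
      simp only [MulAut.mul_apply]
      rw [hcz, hΦc, MulAut.conj_apply, ← hh]
      group
    · refine ⟨(MulAut.conj h * Φ * (MulAut.conj h)⁻¹)⁻¹, ?_⟩
      set ψ := MulAut.conj h * Φ * (MulAut.conj h)⁻¹ with hψ
      have hzz : ψ z⁻¹ = z := by
        have hcz : (MulAut.conj h)⁻¹ z⁻¹ = c := by
          rw [MulAut.inv_def]
          refine (MulEquiv.symm_apply_eq _).mpr ?_
          rw [MulAut.conj_apply]
          exact hh.symm
        rw [hψ]
        simp only [MulAut.mul_apply]
        rw [hcz, hΦc, MulAut.conj_apply]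
        have hz2 : z = h * c⁻¹ * h⁻¹ := by
          rw [← inv_inv z, ← hh]
          group
        rw [hz2]
      rw [MulAut.inv_def]
      exact (MulEquiv.symm_apply_eq ψ).mpr hzz.symm
  -- conclude
  rcases conj_or_conj_inv cardG x y hx hy with ⟨g, hg⟩ | ⟨g, hg⟩
  · exact ⟨MulAut.conj g, by simpa [MulAut.conj_apply] using hg⟩
  · obtain ⟨ψ, hψ⟩ := key2 y hy
    refine ⟨ψ⁻¹ * MulAut.conj g, ?_⟩
    have h1 : ψ⁻¹ y⁻¹ = y := by
      rw [MulAut.inv_def]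
      exact (MulEquiv.symm_apply_eq ψ).mpr hψ.symm
    simp only [MulAut.mul_apply]
    rw [MulAut.conj_apply, hg, h1]
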